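/- arXiv:1705.02391 — 3 statements merged into one kernel-verified Lean document; each statement's English description precedes it below -/
import Mathlib

section
/- Let α, β be reals with α + β > 0, let k ≥ 1, let n₁, …, n_k be nonnegative reals, and let N = Σᵢ nᵢ. Define, for a real n, the map G_n(t) = (t+1)/(α+β+n), whose inverse is G_n^{-1}(p) = (α+β+n)p − 1. Set wᵢ = (α+β+nᵢ)/(α+β+N). Then for all reals p₀, p₁, …, p_k: G_N( −(k−1)·G_0^{-1}(p₀) + Σᵢ G_{nᵢ}^{-1}(pᵢ) ) = (1 − Σᵢ wᵢ)·p₀ + Σᵢ wᵢ·pᵢ. -/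
open Finset

/-- Example 1 (beta/Bernoulli ensemble): with `Gₙ(t) = (t+1)/(α+β+n)` and
`Gₙ⁻¹(p) = (α+β+n)p − 1`, the conjugate-pair Bayesian ensemble
`G_N(−(k−1)G₀⁻¹(p₀) + Σᵢ G_{nᵢ}⁻¹(pᵢ))` equals the linear pool
`(1 − Σᵢ wᵢ)p₀ + Σᵢ wᵢ pᵢ` with `wᵢ = (α+β+nᵢ)/(α+β+N)`. -/
theorem stmt_4 (α β : ℝ) (hαβ : 0 < α + β) (k : ℕ) (hk : 1 ≤ k)
    (n : Fin k → ℝ) (hn : ∀ i, 0 ≤ n i) (N : ℝ) (hN : N = ∑ i, n i)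
    (p₀ : ℝ) (p : Fin k → ℝ) :
    ((-(((k : ℝ) - 1)) * ((α + β + 0) * p₀ - 1) + ∑ i, ((α + β + n i) * p i - 1)) + 1)
        / (α + β + N)
      = (1 - ∑ i, (α + β + n i) / (α + β + N)) * p₀
        + ∑ i, ((α + β + n i) / (α + β + N)) * p i := by
  have hNpos : 0 < α + β + N := by
    have h := Finset.sum_nonneg (fun i _ => hn i) (s := Finset.univ)
    rw [hN]; linarith
  have hne : α + β + N ≠ 0 := ne_of_gt hNpos
  rw [Finset.sum_sub_distrib, Finset.sum_const, Finset.card_univ, Fintype.card_fin]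
  have h1 : ∑ i, (α + β + n i) / (α + β + N) = (∑ i, (α + β + n i)) / (α + β + N) := by
    rw [Finset.sum_div]
  rw [h1, Finset.sum_add_distrib, Finset.sum_const, Finset.card_univ, Fintype.card_fin, ← hN]
  have h2 : ∑ i, ((α + β + n i) / (α + β + N)) * p i
      = (∑ i, (α + β + n i) * p i) / (α + β + N) := by
    rw [Finset.sum_div]; exact Finset.sum_congr rfl fun i _ => by ring
  rw [h2]
  field_simp
  ring
end

section
/- Let k ≥ 2 be a natural number, let α, β be reals with α + β > 0, let n₁ > 0 be a real, and set w = (α+β+n₁)/(α+β+k·n₁). Let p₀, p̄ be reals and define p̂ = (1 − k·w)·p₀ + k·w·p̄. Then: (i) k·w > 1; (ii) if p̄ < p₀ then p̂ < p̄; and (iii) if p̄ > p₀ then p̂ > p̄. In particular the beta/Bernoulli ensemble with exchangeable experts always extremizes the average forecast: p̂ lies strictly farther from p₀ than p̄, on the same side of p₀. -/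
/-- With exchangeable experts, the beta/Bernoulli ensemble
`p̂ = (1 − k·w)p₀ + k·w·p̄`, `w = (α+β+n₁)/(α+β+k·n₁)`, always extremizes the
average forecast: `k·w > 1`, and `p̂ < p̄` when `p̄ < p₀`, `p̂ > p̄` when `p̄ > p₀`. -/
theorem stmt_5 (k : ℕ) (hk : 2 ≤ k) (α β : ℝ) (hαβ : 0 < α + β)
    (n₁ : ℝ) (hn₁ : 0 < n₁) (w : ℝ) (hw : w = (α + β + n₁) / (α + β + k * n₁))
    (p₀ pbar phat : ℝ) (hphat : phat = (1 - k * w) * p₀ + k * w * pbar) :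
    1 < k * w ∧ (pbar < p₀ → phat < pbar) ∧ (pbar > p₀ → phat > pbar) := by
  have hk2 : (2:ℝ) ≤ (k:ℝ) := by exact_mod_cast hk
  have hden : 0 < α + β + k * n₁ := by nlinarith
  have hkw : 1 < (k:ℝ) * w := by
    rw [hw, ← mul_div_assoc, lt_div_iff₀ hden]
    nlinarith
  refine ⟨hkw, ?_, ?_⟩ <;> intro h <;> nlinarith [hphat]
end

section
/- Let Φ denote the cumulative distribution function of the standard normal distribution. For all reals L, c, M and all reals V ≥ 0 and v > 0: ∫_ℝ Φ( (L − c·s)/√v ) dγ_{M,V}(s) = Φ( (L − c·M)/√(c²·V + v) ), where γ_{M,V} is the Gaussian measure on ℝ with mean M and variance V. -/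
open MeasureTheory ProbabilityTheory
open scoped NNReal

open Real
open scoped ENNReal

lemma pdf_conv (m x : ℝ) (A B : ℝ≥0) (hA : A ≠ 0) (hB : B ≠ 0) :
    ∫ t, gaussianPDFReal m A t * gaussianPDFReal x B t = gaussianPDFReal m (A + B) x := by
  have ha : (0:ℝ) < A := lt_of_le_of_ne A.coe_nonneg (by exact_mod_cast (Ne.symm hA))
  have hb : (0:ℝ) < B := lt_of_le_of_ne B.coe_nonneg (by exact_mod_cast (Ne.symm hB))
  set a : ℝ := (A:ℝ)
  set b : ℝ := (B:ℝ)
  set k : ℝ := (a + b) / (2 * a * b) with hk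
  have hkpos : 0 < k := by positivity
  set μs : ℝ := (b * m + a * x) / (a + b) with hμs
  set C : ℝ := (√(2 * π * a))⁻¹ * (√(2 * π * b))⁻¹ * rexp (-(x - m)^2 / (2 * (a + b))) with hC
  have hexp : ∀ t : ℝ, -(t - m)^2 / (2 * a) + -(t - x)^2 / (2 * b)
      = -k * (t - μs)^2 + -(x - m)^2 / (2 * (a + b)) := by
    intro t
    rw [hk, hμs]
    field_simp
    ring
  have hfun : ∀ t, gaussianPDFReal m A t * gaussianPDFReal x B t
      = C * rexp (-k * (t - μs)^2) := by
    intro t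
    rw [gaussianPDFReal, gaussianPDFReal, hC, mul_mul_mul_comm, ← Real.exp_add, hexp t,
      Real.exp_add]
    ring
  rw [MeasureTheory.integral_congr_ae (Filter.Eventually.of_forall hfun)]
  rw [MeasureTheory.integral_const_mul]
  have : ∫ t, rexp (-k * (t - μs)^2) = ∫ t, rexp (-k * t ^ 2) := by
    exact integral_sub_right_eq_self (fun t => rexp (-k * t^2)) μs
  rw [this, integral_gaussian]
  rw [gaussianPDFReal, hC]
  have hab : a + b = ((A + B : ℝ≥0) : ℝ) := by push_cast; ring
  rw [← hab]
  rw [show (√(2 * π * a))⁻¹ * (√(2 * π * b))⁻¹ * rexp (-(x - m) ^ 2 / (2 * (a + b))) * √(π / k)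
    = ((√(2 * π * a))⁻¹ * (√(2 * π * b))⁻¹ * √(π / k)) * rexp (-(x - m) ^ 2 / (2 * (a + b))) by
      ring]
  congr 1
  rw [← Real.sqrt_inv, ← Real.sqrt_inv, ← Real.sqrt_mul (by positivity),
    ← Real.sqrt_mul (by positivity), ← Real.sqrt_inv]
  congr 1
  rw [hk]
  field_simp

lemma gauss_Iic (a L : ℝ) (w : ℝ≥0) (hw : w ≠ 0) :
    gaussianReal a w (Set.Iic L) = gaussianReal 0 1 (Set.Iic ((L - a) / Real.sqrt w)) := by
  have hws : (0:ℝ) < Real.sqrt w := Real.sqrt_pos.mpr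
    (lt_of_le_of_ne w.coe_nonneg (by exact_mod_cast (Ne.symm hw)))
  have h1 : (gaussianReal 0 1).map (fun x : ℝ => Real.sqrt w * x)
      = gaussianReal 0 w := by
    rw [gaussianReal_map_const_mul]
    congr 1
    · ring
    · ext
      simp [Real.sq_sqrt w.coe_nonneg]
  have h2 : (gaussianReal 0 1).map (fun x : ℝ => Real.sqrt w * x + a)
      = gaussianReal a w := by
    have : (fun x : ℝ => Real.sqrt w * x + a)
        = (fun x : ℝ => x + a) ∘ (fun x : ℝ => Real.sqrt w * x) := rfl
    rw [this, ← Measure.map_map (by fun_prop) (by fun_prop), h1, gaussianReal_map_add_const,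
      zero_add]
  rw [← h2, Measure.map_apply (by fun_prop) measurableSet_Iic]
  congr 1
  ext x
  simp only [Set.mem_preimage, Set.mem_Iic]
  rw [le_div_iff₀ hws]
  constructor <;> intro h <;> nlinarith

lemma cdf_measurable (v : ℝ≥0) (L : ℝ) (hv : v ≠ 0) :
    Measurable (fun t => (gaussianReal t v (Set.Iic L)).toReal) := by
  have hmono : Monotone (fun u : ℝ => (gaussianReal 0 1 (Set.Iic u)).toReal) := by
    intro u1 u2 h
    exact ENNReal.toReal_mono (measure_ne_top _ _) (measure_mono (Set.Iic_subset_Iic.mpr h))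
  have : (fun t => (gaussianReal t v (Set.Iic L)).toReal)
      = (fun u : ℝ => (gaussianReal 0 1 (Set.Iic u)).toReal)
        ∘ (fun t => (L - t) / Real.sqrt v) := by
    funext t
    simp [Function.comp, gauss_Iic t L v hv]
  rw [this]
  exact hmono.measurable.comp (by fun_prop)

lemma gauss_mix (L m : ℝ) (W v : ℝ≥0) (hv : v ≠ 0) :
    ∫ t, (gaussianReal t v (Set.Iic L)).toReal ∂(gaussianReal m W)
      = (gaussianReal m (W + v) (Set.Iic L)).toReal := by
  have hmeasf := cdf_measurable v L hv
  by_cases hW : W = 0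
  · rw [hW, gaussianReal_zero_var, integral_dirac' _ _ hmeasf.stronglyMeasurable, zero_add]
  -- W ≠ 0
  have hWv : W + v ≠ 0 := by
    intro h
    exact hv (by simpa using (add_eq_zero.mp h).2)
  have hmeas' : Measurable (fun t => gaussianReal t v (Set.Iic L)) := by
    have : (fun t => gaussianReal t v (Set.Iic L))
        = fun t => ENNReal.ofReal ((gaussianReal t v (Set.Iic L)).toReal) :=
      funext fun t => (ENNReal.ofReal_toReal (measure_ne_top _ _)).symm
    rw [this]
    exact hmeasf.ennreal_ofReal
  rw [integral_eq_lintegral_of_nonneg_ae (ae_of_all _ fun t => ENNReal.toReal_nonneg)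
    hmeasf.aestronglyMeasurable]
  congr 1
  simp_rw [ENNReal.ofReal_toReal (measure_ne_top _ _)]
  rw [gaussianReal_of_var_ne_zero m hW,
    lintegral_withDensity_eq_lintegral_mul _ (measurable_gaussianPDF m W) hmeas']
  simp only [Pi.mul_apply]
  have hpush : ∀ t, gaussianPDF m W t * ∫⁻ x in Set.Iic L, gaussianPDF t v x
      = ∫⁻ x in Set.Iic L, gaussianPDF m W t * gaussianPDF t v x := fun t =>
    (lintegral_const_mul' _ _ ENNReal.ofReal_ne_top).symm
  simp_rw [gaussianReal_apply _ hv (Set.Iic L), hpush]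
  have hjm : Measurable (Function.uncurry fun t x : ℝ =>
      gaussianPDF m W t * gaussianPDF t v x) := by
    apply Measurable.mul (f := fun p : ℝ × ℝ => gaussianPDF m W p.1)
      (g := fun p : ℝ × ℝ => gaussianPDF p.1 v p.2)
    · exact (measurable_gaussianPDF m W).comp measurable_fst
    · unfold gaussianPDF gaussianPDFReal
      fun_prop
  rw [lintegral_lintegral_swap hjm.aemeasurable]
  have hinner : ∀ x, ∫⁻ t, gaussianPDF m W t * gaussianPDF t v x = gaussianPDF m (W + v) x := by
    intro x
    have hsymm : ∀ t, gaussianPDF t v x = gaussianPDF x v t := by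
      intro t
      unfold gaussianPDF gaussianPDFReal
      rw [show (x - t)^2 = (t - x)^2 by ring]
    simp_rw [hsymm, gaussianPDF, ← ENNReal.ofReal_mul (gaussianPDFReal_nonneg _ _ _)]
    have hint : Integrable (fun t => gaussianPDFReal m W t * gaussianPDFReal x v t) := by
      have := (integrable_gaussianPDFReal m W).bdd_mul
        ((stronglyMeasurable_gaussianPDFReal x v).aestronglyMeasurable)
        (c := (Real.sqrt (2 * Real.pi * v))⁻¹) (ae_of_all _ fun t => by
          rw [Real.norm_eq_abs, abs_of_nonneg (gaussianPDFReal_nonneg _ _ _), gaussianPDFReal]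
          calc (Real.sqrt (2 * Real.pi * v))⁻¹ * Real.exp (-(t - x)^2 / (2 * v))
              ≤ (Real.sqrt (2 * Real.pi * v))⁻¹ * 1 := by
                gcongr
                apply Real.exp_le_one_iff.mpr
                apply div_nonpos_of_nonpos_of_nonneg
                · simp [sq_nonneg]
                · positivity
            _ = _ := mul_one _)
      simpa [mul_comm] using this
    rw [← ofReal_integral_eq_lintegral_ofReal hint
      (ae_of_all _ fun t => mul_nonneg (gaussianPDFReal_nonneg _ _ _)
        (gaussianPDFReal_nonneg _ _ _)),
      pdf_conv m x W v hW hv]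
  simp_rw [hinner]
  rw [← gaussianReal_apply m hWv (Set.Iic L)]

/-- Gaussian–Φ mixture identity (final step of Proposition 3):
`∫ Φ((L − c·s)/√v) dγ_{M,V}(s) = Φ((L − c·M)/√(c²·V + v))`, where `Φ` is the
standard normal cdf and `γ_{M,V}` the Gaussian measure with mean `M`,
variance `V`. -/
theorem stmt_9 (L c M : ℝ) (V : ℝ≥0) (v : ℝ≥0) (hv : 0 < v) :
    ∫ s, ((gaussianReal 0 1) (Set.Iic ((L - c * s) / Real.sqrt v))).toReal
        ∂(gaussianReal M V)
      = ((gaussianReal 0 1)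
          (Set.Iic ((L - c * M) / Real.sqrt (c ^ 2 * V + v)))).toReal := by
  set Wc : ℝ≥0 := NNReal.mk (c ^ 2) (sq_nonneg c) * V with hWc
  have hWv : Wc + v ≠ 0 := fun h => hv.ne' (add_eq_zero.mp h).2
  have hcoe : c ^ 2 * (V : ℝ) + (v : ℝ) = ((Wc + v : ℝ≥0) : ℝ) := by
    rw [hWc]; push_cast; ring
  rw [show Real.sqrt (c ^ 2 * V + v) = Real.sqrt ((Wc + v : ℝ≥0) : ℝ) by rw [hcoe],
    ← gauss_Iic (c * M) L (Wc + v) hWv]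
  simp_rw [← gauss_Iic _ L v hv.ne']
  rw [← gauss_mix L (c * M) Wc v hv.ne', hWc, ← gaussianReal_map_const_mul c,
    integral_map (by fun_prop) ((cdf_measurable v L hv.ne').aestronglyMeasurable)]
end
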